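/- arXiv:2106.07848 — 5 statements merged into one kernel-verified Lean document; each statement's English description precedes it below -/
import Mathlib

section
/- Every matrix A ∈ SL(2,ℝ) can be written as A = k₁ u k₂ where k₁, k₂ ∈ SO(2) and u = [[1, t],[0, 1]] for some t ∈ ℝ. Equivalently, SO(2) · U · SO(2) = SL(2,ℝ), where U is the group of upper unitriangular 2×2 real matrices. -/
open Matrix

private lemma tr2 {α : Type*} (a b c d : α) :
    (!![a, b; c, d] : Matrix (Fin 2) (Fin 2) α)ᵀ = !![a, c; b, d] := by
  ext i j; fin_cases i <;> fin_cases j <;> rfl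

private lemma exists_unit_vec (a b d : ℝ) (ha : 0 ≤ a) (hd : 0 ≤ d)
    (hadb : a * d - b ^ 2 = 1) :
    ∃ c s : ℝ, c ^ 2 + s ^ 2 = 1 ∧ a * c ^ 2 + 2 * b * c * s + d * s ^ 2 = 1 := by
  by_cases h1 : a = 1
  · exact ⟨1, 0, by norm_num, by simp [h1]⟩
  · have hsum : 2 ≤ a + d := by nlinarith [sq_nonneg (a - d), sq_nonneg b, sq_nonneg (a + d)]
    set r := Real.sqrt (a + d - 2) with hrdef
    have hr : r ^ 2 = a + d - 2 := Real.sq_sqrt (by linarith)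
    set x := (-b + r) / (a - 1) with hxdef
    have ha1 : a - 1 ≠ 0 := sub_ne_zero.mpr h1
    have hx : (a - 1) * x ^ 2 + 2 * b * x + (d - 1) = 0 := by
      rw [hxdef]
      field_simp
      ring_nf
      nlinarith [hr, hadb]
    have hn : (0:ℝ) < x ^ 2 + 1 := by positivity
    set n := Real.sqrt (x ^ 2 + 1) with hndef
    have hn2 : n ^ 2 = x ^ 2 + 1 := Real.sq_sqrt (le_of_lt hn)
    have hnpos : 0 < n := Real.sqrt_pos.mpr hn
    refine ⟨x / n, 1 / n, ?_, ?_⟩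
    · field_simp
      linarith [hn2]
    · have hne : n ≠ 0 := ne_of_gt hnpos
      have hnum : a * (x / n) ^ 2 + 2 * b * (x / n) * (1 / n) + d * (1 / n) ^ 2
          = (a * x ^ 2 + 2 * b * x + d) / n ^ 2 := by ring
      have hnum2 : a * x ^ 2 + 2 * b * x + d = x ^ 2 + 1 := by linear_combination hx
      rw [hnum, hnum2, ← hn2]
      exact div_self (pow_ne_zero 2 hne)

set_option maxHeartbeats 1000000 in
/-- **Theorem.** Every `A ∈ SL(2, ℝ)` can be written as `A = k₁ u k₂` with
`k₁, k₂ ∈ SO(2)` and `u = [[1, t], [0, 1]]` upper unitriangular; that is,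
`SO(2) · U · SO(2) = SL(2, ℝ)`. -/
theorem so2_mul_unipotent_mul_so2_eq_sl2 (A : Matrix (Fin 2) (Fin 2) ℝ) (hA : A.det = 1) :
    ∃ (k₁ k₂ : Matrix (Fin 2) (Fin 2) ℝ) (t : ℝ),
      k₁.det = 1 ∧ k₁ᵀ * k₁ = 1 ∧ k₂.det = 1 ∧ k₂ᵀ * k₂ = 1 ∧
      A = k₁ * !![1, t; 0, 1] * k₂ := by
  have hdet : A 0 0 * A 1 1 - A 0 1 * A 1 0 = 1 := by
    rw [Matrix.det_fin_two] at hA; linarith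
  have hadb : (A 0 0 ^ 2 + A 1 0 ^ 2) * (A 0 1 ^ 2 + A 1 1 ^ 2)
      - (A 0 0 * A 0 1 + A 1 0 * A 1 1) ^ 2 = 1 := by
    linear_combination (A 0 0 * A 1 1 - A 0 1 * A 1 0 + 1) * hdet
  obtain ⟨c, s, hcs, hQ⟩ := exists_unit_vec (A 0 0 ^ 2 + A 1 0 ^ 2)
    (A 0 0 * A 0 1 + A 1 0 * A 1 1) (A 0 1 ^ 2 + A 1 1 ^ 2)
    (by positivity) (by positivity) hadb
  set t : ℝ := (A 0 0 * A 0 1 + A 1 0 * A 1 1) * (c ^ 2 - s ^ 2)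
      + c * s * ((A 0 1 ^ 2 + A 1 1 ^ 2) - (A 0 0 ^ 2 + A 1 0 ^ 2)) with ht
  set u : Matrix (Fin 2) (Fin 2) ℝ := !![1, t; 0, 1] with hu
  set v : Matrix (Fin 2) (Fin 2) ℝ := !![1, -t; 0, 1] with hv
  set K : Matrix (Fin 2) (Fin 2) ℝ := !![c, s; -s, c] with hK
  have hKtK : Kᵀ * K = 1 := by
    rw [hK, tr2, Matrix.mul_fin_two, Matrix.one_fin_two]
    ext i j; fin_cases i <;> fin_cases j <;> simp <;>
      nlinarith [hcs, sq_nonneg c, sq_nonneg s]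
  have hKKt : K * Kᵀ = 1 := by
    rw [hK, tr2, Matrix.mul_fin_two, Matrix.one_fin_two]
    ext i j; fin_cases i <;> fin_cases j <;> simp <;>
      nlinarith [hcs, sq_nonneg c, sq_nonneg s]
  have huv : u * v = 1 := by
    rw [hu, hv, Matrix.mul_fin_two, Matrix.one_fin_two]
    norm_num
  have hvu : v * u = 1 := by
    rw [hu, hv, Matrix.mul_fin_two, Matrix.one_fin_two]
    norm_num
  have hAt : Aᵀ = !![A 0 0, A 1 0; A 0 1, A 1 1] := by
    conv_lhs => rw [Matrix.eta_fin_two A]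
    rw [tr2]
  have hS : Aᵀ * A = !![A 0 0 ^ 2 + A 1 0 ^ 2, A 0 0 * A 0 1 + A 1 0 * A 1 1;
      A 0 0 * A 0 1 + A 1 0 * A 1 1, A 0 1 ^ 2 + A 1 1 ^ 2] := by
    rw [hAt]
    conv_lhs => rw [Matrix.eta_fin_two A]
    rw [Matrix.mul_fin_two]
    ext i j; fin_cases i <;> fin_cases j <;> simp <;> ring
  have hconj : K * (Aᵀ * A) * Kᵀ = uᵀ * u := by
    rw [hS, hK, hu, tr2, tr2, Matrix.mul_fin_two, Matrix.mul_fin_two, Matrix.mul_fin_two]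
    ext i j; fin_cases i <;> fin_cases j <;> simp
    · linear_combination hQ
    · linear_combination ht
    · linear_combination ht
    · linear_combination
        (-((A 0 0 ^ 2 + A 1 0 ^ 2) * s ^ 2 - 2 * (A 0 0 * A 0 1 + A 1 0 * A 1 1) * c * s
            + (A 0 1 ^ 2 + A 1 1 ^ 2) * c ^ 2)) * hQ
        + (c ^ 2 + s ^ 2 + 1) * ((A 0 0 ^ 2 + A 1 0 ^ 2) * (A 0 1 ^ 2 + A 1 1 ^ 2)
            - (A 0 0 * A 0 1 + A 1 0 * A 1 1) ^ 2) * hcs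
        + hadb
        - (t + (A 0 0 * A 0 1 + A 1 0 * A 1 1) * (c ^ 2 - s ^ 2)
            + c * s * ((A 0 1 ^ 2 + A 1 1 ^ 2) - (A 0 0 ^ 2 + A 1 0 ^ 2))) * ht
  have hdetK : K.det = 1 := by
    rw [hK, Matrix.det_fin_two_of]; linear_combination hcs
  refine ⟨A * Kᵀ * v, K, t, ?_, ?_, hdetK, hKtK, ?_⟩
  · have : (A * Kᵀ * v).det = A.det * Kᵀ.det * v.det := by
      rw [Matrix.det_mul, Matrix.det_mul]
    rw [this, hA, Matrix.det_transpose, hdetK, hv, Matrix.det_fin_two_of]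
    norm_num
  · have h1 : (A * Kᵀ * v)ᵀ * (A * Kᵀ * v) = vᵀ * (K * (Aᵀ * A) * Kᵀ) * v := by
      simp only [Matrix.transpose_mul, Matrix.transpose_transpose]
      noncomm_ring
    rw [h1, hconj]
    have h2 : vᵀ * (uᵀ * u) * v = (u * v)ᵀ * (u * v) := by
      rw [Matrix.transpose_mul]; noncomm_ring
    rw [h2, huv, Matrix.transpose_one, one_mul]
  · have h3 : A * Kᵀ * v * u * K = A * Kᵀ * (v * u) * K := by noncomm_ring
    rw [h3, hvu, mul_one, Matrix.mul_assoc, hKtK, mul_one]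
end

section
/- Let g be a finite-dimensional real Lie algebra, θ a Lie algebra automorphism of g with θ∘θ = id, and B a symmetric bilinear form on g that is invariant (B([x,y],z) + B(y,[x,z]) = 0 for all x,y,z ∈ g) and θ-invariant (B(θx, θy) = B(x,y)), such that B_θ(x,y) := −B(x, θy) is positive definite. Let p = {x ∈ g : θx = −x} and let a ⊆ p be a maximal abelian subspace of p (i.e., [a,a] = 0, and every x ∈ p with [x, z] = 0 for all z ∈ a lies in a). For a linear functional λ on a set g_λ = {x ∈ g : [Z, x] = λ(Z)x for all Z ∈ a}. Let λ be a nonzero linear functional on a with g_λ ≠ 0, and let X, X' ∈ g_λ. If [X, θX'] = 0, then X = 0 or X' = 0. -/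
/-- **Lemma.** Let `g` be a finite-dimensional real Lie algebra with a Cartan-type involution
`θ` and an invariant, `θ`-invariant symmetric bilinear form `B` such that
`B_θ(x, y) = -B(x, θ y)` is positive definite.  Let `a` be a maximal abelian subspace of the
`(-1)`-eigenspace `p` of `θ`, `λ` a nonzero linear functional on `a` whose restricted root
space `g_λ` is nonzero, and `X, X' ∈ g_λ`.  If `[X, θ X'] = 0` then `X = 0` or `X' = 0`. -/
theorem restricted_root_bracket_theta_eq_zero (L : Type*) [LieRing L] [LieAlgebra ℝ L]
    [FiniteDimensional ℝ L]
    (θ : L →ₗ⁅ℝ⁆ L) (hθ : ∀ x, θ (θ x) = x)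
    (B : L →ₗ[ℝ] L →ₗ[ℝ] ℝ)
    (hBsymm : ∀ x y, B x y = B y x)
    (hBinv : ∀ x y z : L, B ⁅x, y⁆ z + B y ⁅x, z⁆ = 0)
    (hBθ : ∀ x y, B (θ x) (θ y) = B x y)
    (hBpos : ∀ x : L, x ≠ 0 → 0 < -B x (θ x))
    (a : Submodule ℝ L)
    (ha_sub_p : ∀ x ∈ a, θ x = -x)
    (ha_abelian : ∀ x ∈ a, ∀ y ∈ a, ⁅x, y⁆ = 0)
    (ha_max : ∀ x : L, θ x = -x → (∀ z ∈ a, ⁅x, z⁆ = 0) → x ∈ a)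
    (lam : ↥a →ₗ[ℝ] ℝ) (hlam : lam ≠ 0)
    (hroot_ne : ∃ Y : L, Y ≠ 0 ∧ ∀ Z : ↥a, ⁅(Z : L), Y⁆ = lam Z • Y)
    (X X' : L)
    (hX : ∀ Z : ↥a, ⁅(Z : L), X⁆ = lam Z • X)
    (hX' : ∀ Z : ↥a, ⁅(Z : L), X'⁆ = lam Z • X')
    (h : ⁅X, θ X'⁆ = 0) :
    X = 0 ∨ X' = 0 := by
  by_contra hcon
  push_neg at hcon
  obtain ⟨hXne, hX'ne⟩ := hcon
  -- nonnegativity of the norm form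
  have hnn : ∀ u : L, 0 ≤ -B u (θ u) := by
    intro u
    by_cases hu : u = 0
    · simp [hu]
    · exact (hBpos u hu).le
  -- θX' is a (-λ)-root vector
  have hθX' : ∀ Z : ↥a, ⁅(Z : L), θ X'⁆ = -(lam Z • θ X') := by
    intro Z
    have h1 : θ ⁅(Z : L), θ X'⁆ = -(lam Z • X') := by
      rw [LieHom.map_lie, hθ, ha_sub_p (Z : L) Z.2, neg_lie, hX']
    have := congrArg θ h1
    rwa [hθ, map_neg θ, map_smul θ] at this
  -- the element h0 = -[X', θX']
  set h0 : L := -⁅X', θ X'⁆ with hh0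
  have hθh0 : θ h0 = -h0 := by
    show θ (-⁅X', θ X'⁆) = -(-⁅X', θ X'⁆)
    rw [map_neg θ, LieHom.map_lie, hθ, ← lie_skew, neg_neg]
  have hcommh0 : ∀ z ∈ a, ⁅h0, z⁆ = 0 := by
    intro z hz
    have hz' : ⁅((⟨z, hz⟩ : ↥a) : L), ⁅X', θ X'⁆⁆ = 0 := by
      rw [leibniz_lie, hX' ⟨z, hz⟩, hθX' ⟨z, hz⟩]
      simp [lie_smul, smul_lie]
    have hzz : ⁅z, ⁅X', θ X'⁆⁆ = 0 := hz'
    show ⁅-⁅X', θ X'⁆, z⁆ = 0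
    rw [neg_lie, ← lie_skew, hzz, neg_zero, neg_zero]
  have hh0a : h0 ∈ a := ha_max h0 hθh0 hcommh0
  set hA : ↥a := ⟨h0, hh0a⟩ with hhA
  -- Equation 2: B h0 Z = lam Z * (-B X' (θ X'))
  have heq2 : ∀ Z : ↥a, B h0 (Z : L) = lam Z * (-B X' (θ X')) := by
    intro Z
    have hinv := hBinv X' (θ X') (Z : L)
    have hZX' : ⁅X', (Z : L)⁆ = -(lam Z • X') := by
      rw [← lie_skew, hX' Z]
    have : B ⁅X', θ X'⁆ (Z : L) = lam Z * B (θ X') X' := by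
      rw [hZX'] at hinv
      simp only [map_neg, map_smul, LinearMap.neg_apply, LinearMap.smul_apply,
        smul_eq_mul] at hinv
      linarith
    rw [hh0, map_neg, LinearMap.neg_apply, this, hBsymm (θ X') X']
    ring
  -- Equation 1: lam hA * B X (θ X) = -(-B W (θ W)) where W = [X', X]
  set W : L := ⁅X', X⁆ with hW
  have hbr : ⁅h0, X⁆ = ⁅θ X', W⁆ := by
    have hj : ⁅⁅X', θ X'⁆, X⁆ = ⁅X', ⁅θ X', X⁆⁆ - ⁅θ X', ⁅X', X⁆⁆ := by
      rw [lie_lie]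
    have hz : ⁅θ X', X⁆ = 0 := by rw [← lie_skew, h, neg_zero]
    rw [hh0, hW, neg_lie, hj, hz, lie_zero, zero_sub, neg_neg]
  have heq1 : lam hA * B X (θ X) = -B W (θ W) := by
    have h1 : B ⁅h0, X⁆ (θ X) = lam hA * B X (θ X) := by
      have : ⁅h0, X⁆ = lam hA • X := hX hA
      rw [this, map_smul, LinearMap.smul_apply, smul_eq_mul]
    have h2 : B ⁅θ X', W⁆ (θ X) = -B W (θ W) := by
      have hinv := hBinv (θ X') W (θ X)
      have : ⁅θ X', θ X⁆ = θ W := by rw [← LieHom.map_lie, hW]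
      rw [this] at hinv
      linarith
    rw [← h1, hbr, h2]
  -- combine
  set c : ℝ := lam hA with hc
  have hnX : 0 < -B X (θ X) := hBpos X hXne
  have hnX' : 0 < -B X' (θ X') := hBpos X' hX'ne
  have hcle : c ≤ 0 := by
    have hWnn : 0 ≤ -B W (θ W) := hnn W
    nlinarith [heq1]
  have hBh0h0 : B h0 h0 = c * (-B X' (θ X')) := heq2 hA
  have hBh0θ : -B h0 (θ h0) = B h0 h0 := by
    rw [hθh0, map_neg, neg_neg]
  have hcge : 0 ≤ c := by
    have := hnn h0
    rw [hBh0θ] at this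
    nlinarith
  have hc0 : c = 0 := le_antisymm hcle hcge
  have hh0z : h0 = 0 := by
    by_contra hne
    have := hBpos h0 hne
    rw [hBh0θ, hBh0h0, hc0] at this
    simp at this
  -- h0 = 0 contradicts lam ≠ 0
  obtain ⟨Z0, hZ0⟩ : ∃ Z : ↥a, lam Z ≠ 0 := by
    by_contra hall
    push_neg at hall
    exact hlam (LinearMap.ext fun Z => by rw [hall Z, LinearMap.zero_apply])
  have := heq2 Z0
  rw [hh0z] at this
  simp only [map_zero, LinearMap.zero_apply] at this
  exact absurd this.symm (mul_ne_zero hZ0 (ne_of_gt hnX'))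
end

section
/- Let g be a finite-dimensional real Lie algebra, θ a Lie algebra automorphism of g with θ∘θ = id, and B a symmetric bilinear form on g that is invariant (B([x,y],z) + B(y,[x,z]) = 0 for all x,y,z ∈ g) and θ-invariant (B(θx, θy) = B(x,y)), such that B_θ(x,y) := −B(x, θy) is positive definite. Let p = {x ∈ g : θx = −x} and let a ⊆ p be a maximal abelian subspace of p (i.e., [a,a] = 0, and every x ∈ p with [x, z] = 0 for all z ∈ a lies in a). For a linear functional λ on a set g_λ = {x ∈ g : [Z, x] = λ(Z)x for all Z ∈ a}. Let λ be a nonzero linear functional on a with g_λ ≠ 0, and let X, X' ∈ g_λ. If [X, θX'] ∈ p, then X and X' are linearly dependent. -/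
/-- **Lemma.** Let `g` be a finite-dimensional real Lie algebra with a Cartan-type involution
`θ` and an invariant, `θ`-invariant symmetric bilinear form `B` such that
`B_θ(x, y) = -B(x, θ y)` is positive definite.  Let `a` be a maximal abelian subspace of the
`(-1)`-eigenspace `p` of `θ`, `λ` a nonzero linear functional on `a` whose restricted root
space `g_λ` is nonzero, and `X, X' ∈ g_λ`.  If `[X, θ X'] ∈ p` then `X` and `X'` are linearly
dependent. -/
theorem restricted_root_bracket_theta_mem_p (L : Type*) [LieRing L] [LieAlgebra ℝ L]
    [FiniteDimensional ℝ L]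
    (θ : L →ₗ⁅ℝ⁆ L) (hθ : ∀ x, θ (θ x) = x)
    (B : L →ₗ[ℝ] L →ₗ[ℝ] ℝ)
    (hBsymm : ∀ x y, B x y = B y x)
    (hBinv : ∀ x y z : L, B ⁅x, y⁆ z + B y ⁅x, z⁆ = 0)
    (hBθ : ∀ x y, B (θ x) (θ y) = B x y)
    (hBpos : ∀ x : L, x ≠ 0 → 0 < -B x (θ x))
    (a : Submodule ℝ L)
    (ha_sub_p : ∀ x ∈ a, θ x = -x)
    (ha_abelian : ∀ x ∈ a, ∀ y ∈ a, ⁅x, y⁆ = 0)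
    (ha_max : ∀ x : L, θ x = -x → (∀ z ∈ a, ⁅x, z⁆ = 0) → x ∈ a)
    (lam : ↥a →ₗ[ℝ] ℝ) (hlam : lam ≠ 0)
    (hroot_ne : ∃ Y : L, Y ≠ 0 ∧ ∀ Z : ↥a, ⁅(Z : L), Y⁆ = lam Z • Y)
    (X X' : L)
    (hX : ∀ Z : ↥a, ⁅(Z : L), X⁆ = lam Z • X)
    (hX' : ∀ Z : ↥a, ⁅(Z : L), X'⁆ = lam Z • X')
    (h : θ ⁅X, θ X'⁆ = -⁅X, θ X'⁆) :
    ¬ LinearIndependent ℝ ![X, X'] := by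
  intro hli
  obtain ⟨hX'ne, hnsp⟩ := linearIndependent_fin2.mp hli
  simp only [Matrix.cons_val_one, Matrix.head_cons, Matrix.cons_val_zero] at hX'ne hnsp
  have hXne : X ≠ 0 := by have := hli.ne_zero 0; simpa using this
  -- basic facts about B
  have hnonneg : ∀ v : L, B v (θ v) ≤ 0 := by
    intro v
    rcases eq_or_ne v 0 with rfl | hv
    · simp
    · linarith [hBpos v hv]
  have hzero : ∀ v : L, B v (θ v) = 0 → v = 0 := by
    intro v hv
    by_contra hv'
    have := hBpos v hv'
    linarith
  -- the root-space property of θ-images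
  have hθroot : ∀ (v : L), (∀ Z : ↥a, ⁅(Z : L), v⁆ = lam Z • v) →
      ∀ Z : ↥a, ⁅(Z : L), θ v⁆ = -(lam Z • θ v) := by
    intro v hv Z
    have h1 : ⁅(Z : L), θ v⁆ = θ ⁅θ (Z : L), v⁆ := by rw [θ.map_lie, hθ]
    rw [h1, ha_sub_p _ Z.2, neg_lie, hv, map_neg θ, map_smul θ]
  set α : ℝ := -B X (θ X) with hαdef
  have hα : 0 < α := hBpos X hXne
  set t : ℝ := -B X (θ X') / α with htdef
  set Y : L := X' - t • X with hYdef
  have hYroot : ∀ Z : ↥a, ⁅(Z : L), Y⁆ = lam Z • Y := by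
    intro Z
    rw [hYdef, lie_sub, lie_smul, hX Z, hX' Z, smul_sub, smul_comm]
  have hθYdec : θ Y = θ X' - t • θ X := by rw [hYdef, map_sub θ, map_smul θ]
  have hBXθX : B X (θ X) = -α := by rw [hαdef]; ring
  have horth : B X (θ Y) = 0 := by
    rw [hθYdec, map_sub, map_smul, smul_eq_mul, hBXθX, htdef]
    field_simp
    ring
  have hθXX : θ ⁅X, θ X⁆ = -⁅X, θ X⁆ := by
    rw [θ.map_lie, hθ, ← lie_skew]
  have hWp : θ ⁅X, θ Y⁆ = -⁅X, θ Y⁆ := by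
    rw [hθYdec, lie_sub, lie_smul, map_sub θ, map_smul θ, h, hθXX]
    module
  have hW0 : ∀ Z : ↥a, ⁅(Z : L), ⁅X, θ Y⁆⁆ = 0 := by
    intro Z
    rw [leibniz_lie, hX Z, hθroot Y hYroot Z, smul_lie, lie_neg, lie_smul]
    abel
  have hWa : ⁅X, θ Y⁆ ∈ a := by
    refine ha_max _ hWp fun z hz => ?_
    have h0 : (⁅z, ⁅X, θ Y⁆⁆ : L) = 0 := hW0 ⟨z, hz⟩
    rw [← lie_skew, h0, neg_zero]
  have hBWZ : ∀ Z : ↥a, B ⁅X, θ Y⁆ (Z : L) = 0 := by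
    intro Z
    have h1 := hBinv X (θ Y) (Z : L)
    have h2 : ⁅X, (Z : L)⁆ = -(lam Z • X) := by rw [← lie_skew, hX Z]
    rw [h2] at h1
    have h3 : B (θ Y) (-(lam Z • X)) = -(lam Z * B (θ Y) X) := by
      rw [map_neg, map_smul, smul_eq_mul]
    rw [h3, hBsymm (θ Y) X, horth] at h1
    linarith
  have hWW : B ⁅X, θ Y⁆ ⁅X, θ Y⁆ = 0 := hBWZ ⟨⁅X, θ Y⁆, hWa⟩
  have hW : ⁅X, θ Y⁆ = 0 := by
    apply hzero
    rw [hWp, map_neg, hWW, neg_zero]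
  -- A = ⁅θ X, X⁆ lies in a and λ(A) > 0
  have hθA : θ ⁅θ X, X⁆ = -⁅θ X, X⁆ := by
    rw [θ.map_lie, hθ, ← lie_skew]
  have hA0 : ∀ Z : ↥a, ⁅(Z : L), ⁅θ X, X⁆⁆ = 0 := by
    intro Z
    rw [leibniz_lie, hθroot X hX Z, hX Z, neg_lie, smul_lie, lie_smul]
    abel
  have hAa : ⁅θ X, X⁆ ∈ a := by
    refine ha_max _ hθA fun z hz => ?_
    have h0 : (⁅z, ⁅θ X, X⁆⁆ : L) = 0 := hA0 ⟨z, hz⟩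
    rw [← lie_skew, h0, neg_zero]
  have hBAZ : ∀ Z : ↥a, B ⁅θ X, X⁆ (Z : L) = lam Z * α := by
    intro Z
    have h1 := hBinv (θ X) X (Z : L)
    have h2 : ⁅θ X, (Z : L)⁆ = lam Z • θ X := by
      rw [← lie_skew, hθroot X hX Z, neg_neg]
    rw [h2, map_smul, smul_eq_mul, hBXθX] at h1
    linarith
  set ZA : ↥a := ⟨⁅θ X, X⁆, hAa⟩ with hZAdef
  have hAne : (⁅θ X, X⁆ : L) ≠ 0 := by
    intro h0
    apply hlam
    ext Z
    have h1 := hBAZ Z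
    rw [h0] at h1
    simp only [map_zero, LinearMap.zero_apply] at h1
    have : lam Z = 0 := by
      rcases mul_eq_zero.mp h1.symm with h2 | h2
      · exact h2
      · exact absurd h2 hα.ne'
    simpa using this
  have hlamA : 0 < lam ZA := by
    have h1 : B ⁅θ X, X⁆ ⁅θ X, X⁆ = lam ZA * α := hBAZ ZA
    have h2 : 0 < B ⁅θ X, X⁆ ⁅θ X, X⁆ := by
      have h3 := hBpos _ hAne
      rw [hθA, map_neg] at h3
      linarith
    by_contra hc
    push_neg at hc
    nlinarith
  -- Jacobi identity computation
  have hJac : ⁅X, ⁅θ X, θ Y⁆⁆ = lam ZA • θ Y := by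
    have h1 := leibniz_lie (θ X) X (θ Y)
    rw [hW, lie_zero] at h1
    have h2 : ⁅⁅θ X, X⁆, θ Y⁆ = -(lam ZA • θ Y) := hθroot Y hYroot ZA
    rw [h2] at h1
    have h3 := (neg_add_eq_zero).mp h1.symm
    exact h3.symm
  have hYzero : Y = 0 := by
    apply hzero
    have h1 := hBinv X ⁅θ X, θ Y⁆ Y
    have h2 : ⁅X, Y⁆ = θ ⁅θ X, θ Y⁆ := by rw [θ.map_lie, hθ, hθ]
    rw [hJac, h2, map_smul, LinearMap.smul_apply, smul_eq_mul,
      hBsymm (θ Y) Y] at h1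
    have h4 := hnonneg ⁅θ X, θ Y⁆
    have h5 := hnonneg Y
    have hcb : lam ZA * B Y (θ Y) = 0 := by linarith [mul_nonpos_of_nonneg_of_nonpos hlamA.le h5]
    rcases mul_eq_zero.mp hcb with h6 | h6
    · exact absurd h6 hlamA.ne'
    · exact h6
  have hX'eq : X' = t • X := by
    have h0 : X' - t • X = 0 := hYzero
    exact sub_eq_zero.mp h0
  have htne : t ≠ 0 := by
    intro h0
    rw [h0, zero_smul] at hX'eq
    exact hX'ne hX'eq
  exact hnsp t⁻¹ (by rw [hX'eq, smul_smul, inv_mul_cancel₀ htne, one_smul])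
end

section
/- Let G be a locally compact topological group and let H and L be closed subsets of G. The relation ⋔ is symmetric: if for every compact subset C of G the set C·H·C⁻¹ ∩ L is compact, then for every compact subset C of G the set C·L·C⁻¹ ∩ H is compact. -/
/-- **Fact.** For a locally compact topological group `G` and closed subsets `H, L ⊆ G`,
the relation `⋔` is symmetric: if `C·H·C⁻¹ ∩ L` is compact for every compact `C ⊆ G`,
then `C·L·C⁻¹ ∩ H` is compact for every compact `C ⊆ G`. -/
theorem pitchfork_symm (G : Type*) [Group G] [TopologicalSpace G]
    [IsTopologicalGroup G] [LocallyCompactSpace G]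
    (H L : Set G) (hH : IsClosed H) (hL : IsClosed L)
    (h : ∀ C : Set G, IsCompact C →
      IsCompact ({x | ∃ c ∈ C, ∃ y ∈ H, ∃ c' ∈ C, x = c * y * c'⁻¹} ∩ L)) :
    ∀ C : Set G, IsCompact C →
      IsCompact ({x | ∃ c ∈ C, ∃ y ∈ L, ∃ c' ∈ C, x = c * y * c'⁻¹} ∩ H) := by
  intro C hC
  set K := {x | ∃ c ∈ C⁻¹, ∃ y ∈ H, ∃ c' ∈ C⁻¹, x = c * y * c'⁻¹} ∩ L with hKdef
  have hK : IsCompact K := h _ hC.inv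
  have himg : IsCompact ((fun p : G × G × G => p.1 * p.2.1 * p.2.2⁻¹) '' (C ×ˢ K ×ˢ C)) :=
    (hC.prod (hK.prod hC)).image ((continuous_fst.mul (continuous_snd.fst)).mul (continuous_snd.snd.inv))
  have heq : {x | ∃ c ∈ C, ∃ y ∈ L, ∃ c' ∈ C, x = c * y * c'⁻¹} ∩ H =
      ((fun p : G × G × G => p.1 * p.2.1 * p.2.2⁻¹) '' (C ×ˢ K ×ˢ C)) ∩ H := by
    ext x
    constructor
    · rintro ⟨⟨c, hc, y, hy, c', hc', rfl⟩, hxH⟩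
      exact ⟨⟨(c, (y, c')), ⟨hc, ⟨⟨c⁻¹, Set.inv_mem_inv.mpr hc, c * y * c'⁻¹, hxH,
        c'⁻¹, Set.inv_mem_inv.mpr hc', by simp [mul_assoc]⟩, hy⟩, hc'⟩, rfl⟩, hxH⟩
    · rintro ⟨⟨⟨c, y, c'⟩, ⟨hc, ⟨⟨_, hy⟩, hc'⟩⟩, rfl⟩, hxH⟩
      exact ⟨⟨c, hc, y, hy, c', hc', rfl⟩, hxH⟩
  rw [heq]
  exact himg.inter_right hH
end

section
/- Let G be a locally compact Hausdorff topological group and let H and L be closed subgroups of G. Then the left-translation action of L on the homogeneous space G/H is proper (i.e., the map L × G/H → G/H × G/H, (l, x) ↦ (l·x, x), is a proper map: preimages of compact sets are compact) if and only if H ⋔ L in G, i.e., for every compact subset C of G the set C·H·C⁻¹ ∩ L is compact. -/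
open Set Topology Filter Pointwise

private lemma exists_compact_image_superset' {G : Type*} [Group G] [TopologicalSpace G]
    [IsTopologicalGroup G] [LocallyCompactSpace G] (H : Subgroup G) {K : Set (G ⧸ H)}
    (hK : IsCompact K) :
    ∃ C : Set G, IsCompact C ∧ K ⊆ (QuotientGroup.mk : G → G ⧸ H) '' C := by
  choose g hg using QuotientGroup.mk_surjective (s := H)
  choose V hVc hVn using fun y : G ⧸ H => exists_compact_mem_nhds (g y)
  have hU : ∀ y ∈ K, (QuotientGroup.mk : G → G ⧸ H) '' V y ∈ 𝓝 y := by
    intro y _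
    have : 𝓝 y = Filter.map (QuotientGroup.mk : G → G ⧸ H) (𝓝 (g y)) := by
      conv_lhs => rw [← hg y]
      exact QuotientGroup.nhds_eq H (g y)
    rw [this, Filter.mem_map]
    exact Filter.mem_of_superset (hVn y) (subset_preimage_image _ _)
  obtain ⟨t, ht⟩ := hK.elim_nhds_subcover' (fun y _ => (QuotientGroup.mk : G → G ⧸ H) '' V y) hU
  refine ⟨⋃ y ∈ t, V (y : G ⧸ H), ?_, ?_⟩
  · exact t.finite_toSet.isCompact_biUnion fun y _ => hVc _
  · refine ht.trans ?_
    rw [image_iUnion₂]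

private lemma quotient_t2 {G : Type*} [Group G] [TopologicalSpace G]
    [IsTopologicalGroup G] (H : Subgroup G) (hH : IsClosed (H : Set G)) :
    T2Space (G ⧸ H) := by
  rw [t2_iff_isClosed_diagonal]
  have hq := (QuotientGroup.isOpenQuotientMap_mk (N := H)).prodMap
    (QuotientGroup.isOpenQuotientMap_mk (N := H))
  rw [← hq.isQuotientMap.isClosed_preimage]
  have : (Prod.map (QuotientGroup.mk : G → G ⧸ H) QuotientGroup.mk) ⁻¹'
      (diagonal (G ⧸ H)) = (fun p : G × G => p.1⁻¹ * p.2) ⁻¹' (H : Set G) := by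
    ext ⟨a, b⟩
    simp [diagonal, Prod.map, QuotientGroup.eq]
  rw [this]
  exact hH.preimage (by fun_prop)

/-- **Fact.** Let `G` be a locally compact Hausdorff topological group and `H, L` closed
subgroups.  The left-translation action of `L` on `G/H` is proper (preimages of compact
sets under `(l, x) ↦ (l·x, x)` are compact) if and only if `H ⋔ L` in `G`, i.e.
`C·H·C⁻¹ ∩ L` is compact for every compact `C ⊆ G`. -/
theorem proper_action_on_quotient_iff_pitchfork (G : Type*) [Group G] [TopologicalSpace G]
    [IsTopologicalGroup G] [LocallyCompactSpace G] [T2Space G]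
    (H L : Subgroup G) (hH : IsClosed (H : Set G)) (hL : IsClosed (L : Set G)) :
    (∀ K : Set ((G ⧸ H) × (G ⧸ H)), IsCompact K →
      IsCompact ((fun p : ↥L × (G ⧸ H) => ((p.1 : G) • p.2, p.2)) ⁻¹' K)) ↔
    (∀ C : Set G, IsCompact C →
      IsCompact ({x | ∃ c ∈ C, ∃ h ∈ (H : Set G), ∃ c' ∈ C, x = c * h * c'⁻¹} ∩
        (L : Set G))) := by
  haveI : T2Space (G ⧸ H) := quotient_t2 H hH
  have hcont : Continuous (fun p : ↥L × (G ⧸ H) => ((p.1 : G) • p.2, p.2)) :=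
    ((continuous_subtype_val.comp continuous_fst).smul continuous_snd).prodMk continuous_snd
  have hset : ∀ C : Set G, {x | ∃ c ∈ C, ∃ h ∈ (H : Set G), ∃ c' ∈ C, x = c * h * c'⁻¹} =
      C * (H : Set G) * C⁻¹ := by
    intro C
    ext x
    constructor
    · rintro ⟨c, hc, h, hh, c', hc', rfl⟩
      exact mul_mem_mul (mul_mem_mul hc hh) (inv_mem_inv.2 hc')
    · rintro ⟨_, ⟨c, hc, h, hh, rfl⟩, y, hy, rfl⟩
      exact ⟨c, hc, h, hh, y⁻¹, by simpa using hy, by simp⟩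
  constructor
  · -- proper → pitchfork
    intro hp C hC
    rw [hset]
    have hclosed : IsClosed ((C * (H : Set G) * C⁻¹) ∩ (L : Set G)) :=
      ((hH.mul_left_of_isCompact hC).mul_right_of_isCompact hC.inv).inter hL
    set K : Set ((G ⧸ H) × (G ⧸ H)) :=
      ((QuotientGroup.mk : G → G ⧸ H) '' C) ×ˢ ((QuotientGroup.mk : G → G ⧸ H) '' C)
    have hKc : IsCompact K := (hC.image QuotientGroup.continuous_mk).prod
      (hC.image QuotientGroup.continuous_mk)
    have hP := hp K hKc
    have himg : IsCompact ((fun p : ↥L × (G ⧸ H) => (p.1 : G)) ''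
        ((fun p : ↥L × (G ⧸ H) => ((p.1 : G) • p.2, p.2)) ⁻¹' K)) :=
      hP.image (continuous_subtype_val.comp continuous_fst)
    refine IsCompact.of_isClosed_subset himg hclosed ?_
    rintro x ⟨⟨_, ⟨c, hc, h, hh, rfl⟩, d, hd, rfl⟩, hxL⟩
    obtain ⟨c', hc', rfl⟩ : ∃ c' ∈ C, d = c'⁻¹ := ⟨d⁻¹, by simpa using hd, by simp⟩
    refine ⟨(⟨c * h * c'⁻¹, hxL⟩, (QuotientGroup.mk c' : G ⧸ H)), ⟨?_, mem_image_of_mem _ hc'⟩, rfl⟩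
    show ((c * h * c'⁻¹ : G) • (QuotientGroup.mk c' : G ⧸ H)) ∈ _
    have : ((c * h * c'⁻¹ : G) • (QuotientGroup.mk c' : G ⧸ H)) = QuotientGroup.mk c := by
      rw [MulAction.Quotient.smul_mk]
      simp only [smul_eq_mul, inv_mul_cancel_right]
      exact QuotientGroup.mk_mul_of_mem c hh
    rw [this]
    exact mem_image_of_mem _ hc
  · -- pitchfork → proper
    intro hpf K hK
    obtain ⟨C, hCc, hCK⟩ := exists_compact_image_superset' H
      ((hK.image continuous_fst).union (hK.image continuous_snd))
    have hS := hpf C hCc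
    rw [hset] at hS
    have hSubL : IsCompact ((Subtype.val : ↥L → G) ⁻¹'
        ((C * (H : Set G) * C⁻¹) ∩ (L : Set G))) := by
      rw [Topology.IsEmbedding.subtypeVal.isCompact_iff]
      have : Subtype.val '' ((Subtype.val : ↥L → G) ⁻¹'
          ((C * (H : Set G) * C⁻¹) ∩ (L : Set G))) =
          (C * (H : Set G) * C⁻¹) ∩ (L : Set G) := by
        ext x
        constructor
        · rintro ⟨⟨y, hy⟩, hmem, rfl⟩; exact hmem
        · intro hx; exact ⟨⟨x, hx.2⟩, hx, rfl⟩
      rw [this]; exact hS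
    refine IsCompact.of_isClosed_subset (hSubL.prod
      (hCc.image QuotientGroup.continuous_mk)) (hK.isClosed.preimage hcont) ?_
    rintro ⟨l, x⟩ hlx
    have h1 : ((l : G) • x, x) ∈ K := hlx
    have hx : x ∈ (QuotientGroup.mk : G → G ⧸ H) '' C :=
      hCK (Or.inr ⟨_, h1, rfl⟩)
    have hlxc : (l : G) • x ∈ (QuotientGroup.mk : G → G ⧸ H) '' C :=
      hCK (Or.inl ⟨_, h1, rfl⟩)
    obtain ⟨c', hc', rfl⟩ := hx
    obtain ⟨c, hc, hceq⟩ := hlxc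
    constructor
    · show (l : G) ∈ (C * (H : Set G) * C⁻¹) ∩ (L : Set G)
      rw [MulAction.Quotient.smul_mk] at hceq
      rw [QuotientGroup.eq] at hceq
      simp only [smul_eq_mul] at hceq
      refine ⟨⟨_, mul_mem_mul hc hceq, c'⁻¹, inv_mem_inv.2 hc', ?_⟩, l.2⟩
      group
    · exact mem_image_of_mem _ hc'
end
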